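/- Let n ≥ 1 be an integer, let t ∈ ℝ, h > 0, and let a, b ≥ 0 satisfy b < 1 and a + b < 1. Set C := max{1, Γ(1 − b), Γ(1 − a − b)}. Then, writing s₀ := t, one has ∑_{i=1}^n ∫_{{t < s₁ < ⋯ < s_n < t + h}} (s_i − s_{i−1})^{−a} ∏_{j=1}^n (s_j − s_{j−1})^{−b} ds ≤ n · Cⁿ · h^{n − nb − a} / Γ(n − nb − a + 1). -/

import Mathlib

open MeasureTheory Set intervalIntegral


lemma ofReal_betaFun {p q v : ℝ} (h0 : 0 ≤ v) (h1 : v ≤ 1) :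
    (v:ℂ) ^ ((p:ℂ) - 1) * (1 - (v:ℂ)) ^ ((q:ℂ) - 1) = ((v ^ (p-1) * (1-v) ^ (q-1) : ℝ) : ℂ) := by
  have e1 : ((p:ℂ) - 1) = ((p - 1 : ℝ) : ℂ) := by push_cast; ring
  have e2 : ((q:ℂ) - 1) = ((q - 1 : ℝ) : ℂ) := by push_cast; ring
  have e3 : (1 - (v:ℂ)) = ((1 - v : ℝ) : ℂ) := by push_cast; ring
  rw [e1, e2, e3, ← Complex.ofReal_cpow h0, ← Complex.ofReal_cpow (by linarith)]
  push_cast; ring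

lemma beta01 {p q : ℝ} (hp : 0 < p) (hq : 0 < q) :
    ∫ v in (0:ℝ)..1, v ^ (p-1) * (1-v) ^ (q-1)
      = Real.Gamma p * Real.Gamma q / Real.Gamma (p+q) := by
  have key : Complex.betaIntegral p q = ((∫ v in (0:ℝ)..1, v ^ (p-1) * (1-v) ^ (q-1) : ℝ) : ℂ) := by
    rw [Complex.betaIntegral, ← intervalIntegral.integral_ofReal]
    refine intervalIntegral.integral_congr fun v hv => ?_
    rw [Set.uIcc_of_le (by norm_num : (0:ℝ) ≤ 1)] at hv
    exact ofReal_betaFun hv.1 hv.2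
  have h2 := Complex.Gamma_mul_Gamma_eq_betaIntegral
    (by simpa using hp : 0 < (p:ℂ).re) (by simpa using hq : 0 < (q:ℂ).re)
  rw [key] at h2
  rw [← Complex.ofReal_add, Complex.Gamma_ofReal, Complex.Gamma_ofReal, Complex.Gamma_ofReal] at h2
  have h3 : Real.Gamma p * Real.Gamma q = Real.Gamma (p+q) * ∫ v in (0:ℝ)..1, v ^ (p-1) * (1-v) ^ (q-1) := by
    exact_mod_cast h2
  have hG : Real.Gamma (p+q) ≠ 0 := (Real.Gamma_pos_of_pos (by linarith)).ne'
  field_simp [hG] at h3 ⊢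
  linarith [h3]

lemma beta01_integrable {p q : ℝ} (hp : 0 < p) (hq : 0 < q) :
    IntervalIntegrable (fun v : ℝ => v ^ (p-1) * (1-v) ^ (q-1)) volume 0 1 := by
  have hc := Complex.betaIntegral_convergent
    (by simpa using hp : 0 < (p:ℂ).re) (by simpa using hq : 0 < (q:ℂ).re)
  rw [intervalIntegrable_iff] at hc ⊢
  have hre := hc.re
  refine hre.congr ?_
  refine (ae_restrict_iff' measurableSet_uIoc).2 (ae_of_all _ fun v hv => ?_)
  rw [Set.uIoc_of_le (by norm_num : (0:ℝ) ≤ 1)] at hv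
  show RCLike.re ((v:ℂ) ^ ((p:ℂ) - 1) * (1 - (v:ℂ)) ^ ((q:ℂ) - 1)) = _
  rw [ofReal_betaFun hv.1.le hv.2]
  simp

lemma beta0L_integrable {p q L : ℝ} (hp : 0 < p) (hq : 0 < q) (hL : 0 < L) :
    IntervalIntegrable (fun u : ℝ => u ^ (p-1) * (L-u) ^ (q-1)) volume 0 L := by
  have h1 := (beta01_integrable hp hq).comp_mul_right (c := L⁻¹)
  simp only [div_inv_eq_mul, zero_mul, one_mul] at h1
  have h2 := h1.const_mul (L ^ (p-1) * L ^ (q-1))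
  refine IntervalIntegrable.congr_ae h2 ?_
  refine (ae_restrict_iff' measurableSet_uIoc).2 (ae_of_all _ fun u hu => ?_)
  rw [Set.uIoc_of_le hL.le] at hu
  have hu0 : 0 < u := hu.1
  have huL : u ≤ L := hu.2
  have e1 : (u * L⁻¹) ^ (p-1) = u ^ (p-1) * (L ^ (p-1))⁻¹ := by
    rw [Real.mul_rpow hu0.le (by positivity), Real.inv_rpow hL.le]
  have e2 : (1 - u * L⁻¹) ^ (q-1) = (L - u) ^ (q-1) * (L ^ (q-1))⁻¹ := by
    have h : 1 - u * L⁻¹ = (L - u) * L⁻¹ := by field_simp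
    rw [h, Real.mul_rpow (by linarith) (by positivity), Real.inv_rpow hL.le]
  simp only [e1, e2]
  have hLp : (0:ℝ) < L ^ (p-1) := Real.rpow_pos_of_pos hL _
  have hLq : (0:ℝ) < L ^ (q-1) := Real.rpow_pos_of_pos hL _
  field_simp

lemma beta0L {p q L : ℝ} (hp : 0 < p) (hq : 0 < q) (hL : 0 < L) :
    ∫ u in (0:ℝ)..L, u ^ (p-1) * (L-u) ^ (q-1)
      = Real.Gamma p * Real.Gamma q / Real.Gamma (p+q) * L ^ (p+q-1) := by
  have key := intervalIntegral.integral_comp_mul_right (a := 0) (b := 1)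
    (fun u : ℝ => u ^ (p-1) * (L-u) ^ (q-1)) hL.ne'
  simp only [zero_mul, one_mul] at key
  have congr1 : ∫ v in (0:ℝ)..1, (v*L) ^ (p-1) * (L - v*L) ^ (q-1)
      = ∫ v in (0:ℝ)..1, (L ^ (p-1) * L ^ (q-1)) * (v ^ (p-1) * (1-v) ^ (q-1)) := by
    refine intervalIntegral.integral_congr fun v hv => ?_
    rw [Set.uIcc_of_le (by norm_num : (0:ℝ) ≤ 1)] at hv
    have e1 : (v*L) ^ (p-1) = v ^ (p-1) * L ^ (p-1) := Real.mul_rpow hv.1 hL.le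
    have e2 : (L - v*L) ^ (q-1) = (1-v) ^ (q-1) * L ^ (q-1) := by
      have h : L - v*L = (1-v) * L := by ring
      rw [h, Real.mul_rpow (by linarith [hv.2]) hL.le]
    rw [e1, e2]; ring
  rw [congr1, intervalIntegral.integral_const_mul, beta01 hp hq, smul_eq_mul] at key
  have expo : L * (L ^ (p-1) * L ^ (q-1)) = L ^ (p+q-1) := by
    nth_rewrite 1 [show L = L ^ (1:ℝ) from (Real.rpow_one L).symm]
    rw [← Real.rpow_add hL, ← Real.rpow_add hL]
    congr 1; ring
  have hLne : L ≠ 0 := hL.ne'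
  rw [← expo,
    show Real.Gamma p * Real.Gamma q / Real.Gamma (p+q) * (L * (L ^ (p-1) * L ^ (q-1)))
      = L * (L ^ (p-1) * L ^ (q-1) * (Real.Gamma p * Real.Gamma q / Real.Gamma (p+q))) from by ring,
    key]
  field_simp

lemma betaIoo {p q t x : ℝ} (hp : 0 < p) (hq : 0 < q) (htx : t < x) :
    ∫⁻ y in Set.Ioo t x, ENNReal.ofReal ((y - t) ^ (p-1) * (x - y) ^ (q-1))
      = ENNReal.ofReal (Real.Gamma p * Real.Gamma q / Real.Gamma (p+q) * (x - t) ^ (p+q-1)) := by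
  have hL : 0 < x - t := by linarith
  rw [Measure.restrict_congr_set Ioo_ae_eq_Ioc]
  have hii : IntervalIntegrable (fun y => (y - t) ^ (p-1) * (x - y) ^ (q-1)) volume t x := by
    have h1 := (beta0L_integrable hp hq hL).comp_sub_right t
    simp only [zero_add] at h1
    have h2 : x - t + t = x := by ring
    rw [h2] at h1
    refine IntervalIntegrable.congr_ae h1 ?_
    refine (ae_restrict_iff' measurableSet_uIoc).2 (ae_of_all _ fun y _ => ?_)
    have h : x - t - (y - t) = x - y := by ring
    simp only [h]
  have hint : IntegrableOn (fun y => (y - t) ^ (p-1) * (x - y) ^ (q-1)) (Set.Ioc t x) volume := by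
    rwa [intervalIntegrable_iff_integrableOn_Ioc_of_le htx.le] at hii
  have hnn : 0 ≤ᵐ[volume.restrict (Set.Ioc t x)]
      fun y => (y - t) ^ (p-1) * (x - y) ^ (q-1) := by
    refine (ae_restrict_iff' measurableSet_Ioc).2 (ae_of_all _ fun y hy => ?_)
    have h1 : 0 ≤ y - t := by linarith [hy.1]
    have h2 : 0 ≤ x - y := by linarith [hy.2]
    positivity
  rw [← ofReal_integral_eq_lintegral_ofReal hint hnn]
  congr 1
  rw [show ∫ y in Set.Ioc t x, (y - t) ^ (p-1) * (x - y) ^ (q-1)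
      = ∫ y in t..x, (y - t) ^ (p-1) * (x - y) ^ (q-1)
    from (intervalIntegral.integral_of_le htx.le).symm]
  have key := intervalIntegral.integral_comp_sub_right (a := t) (b := x)
    (fun u : ℝ => u ^ (p-1) * ((x - t) - u) ^ (q-1)) t
  simp only [sub_self] at key
  have congr2 : ∫ y in t..x, (y - t) ^ (p-1) * (x - y) ^ (q-1)
      = ∫ y in t..x, (y - t) ^ (p-1) * ((x - t) - (y - t)) ^ (q-1) := by
    refine intervalIntegral.integral_congr fun y _ => ?_
    have h : x - t - (y - t) = x - y := by ring
    rw [h]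
  rw [congr2, key, beta0L hp hq hL]

lemma measurableSet_simplex (n : ℕ) (t x : ℝ) :
    MeasurableSet {s : Fin n → ℝ | StrictMono s ∧ ∀ j, s j ∈ Set.Ioo t x} := by
  have h1 : MeasurableSet {s : Fin n → ℝ | StrictMono s} := by
    have e : {s : Fin n → ℝ | StrictMono s} = ⋂ (i : Fin n) (j : Fin n) (_ : i < j), {s | s i < s j} := by
      ext s
      simp only [mem_setOf_eq, mem_iInter, StrictMono]
    rw [e]
    exact MeasurableSet.iInter fun i => MeasurableSet.iInter fun j =>
      MeasurableSet.iInter fun _ => measurableSet_lt (measurable_pi_apply i) (measurable_pi_apply j)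
  have h2 : MeasurableSet {s : Fin n → ℝ | ∀ j, s j ∈ Set.Ioo t x} := by
    have e : {s : Fin n → ℝ | ∀ j, s j ∈ Set.Ioo t x} = ⋂ (j : Fin n), (fun s => s j) ⁻¹' Set.Ioo t x := by
      ext s; simp
    rw [e]
    exact MeasurableSet.iInter fun j => measurableSet_Ioo.preimage (measurable_pi_apply j)
  exact h1.inter h2

lemma cons_mem_simplex {n : ℕ} {t x y : ℝ} {s' : Fin n → ℝ} :
    (StrictMono (Fin.cons y s' : Fin (n+1) → ℝ) ∧ ∀ j, (Fin.cons y s' : Fin (n+1) → ℝ) j ∈ Set.Ioo t x)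
    ↔ (y ∈ Set.Ioo t x ∧ (StrictMono s' ∧ ∀ j, s' j ∈ Set.Ioo y x)) := by
  constructor
  · rintro ⟨hm, hb⟩
    refine ⟨by simpa using hb 0, fun i j hij => ?_, fun j => ?_⟩
    · have := hm (show Fin.succ i < Fin.succ j from Fin.succ_lt_succ_iff.2 hij)
      simpa using this
    · exact ⟨by simpa using hm (Fin.succ_pos j), by simpa using (hb j.succ).2⟩
  · rintro ⟨hy, hm, hb⟩
    constructor
    · intro i j hij
      rcases Fin.eq_zero_or_eq_succ j with rfl | ⟨k, rfl⟩
      · exact absurd hij (Fin.not_lt_zero i)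
      · rcases Fin.eq_zero_or_eq_succ i with rfl | ⟨m, rfl⟩
        · simpa using (hb k).1
        · simp only [Fin.cons_succ]
          exact hm (Fin.succ_lt_succ_iff.1 hij)
    · intro j
      rcases Fin.eq_zero_or_eq_succ j with rfl | ⟨k, rfl⟩
      · simpa using hy
      · simp only [Fin.cons_succ]
        exact ⟨lt_trans hy.1 (hb k).1, (hb k).2⟩

lemma gap_prod_cons {n : ℕ} (t y : ℝ) (s' : Fin n → ℝ) (e : Fin (n+1) → ℝ) :
    (∏ j : Fin (n+1), ((Fin.cons y s' : Fin (n+1) → ℝ) j -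
        (if hj : (j:ℕ) = 0 then t else (Fin.cons y s' : Fin (n+1) → ℝ) ⟨(j:ℕ)-1, by omega⟩)) ^ (e j - 1))
      = (y - t) ^ (e 0 - 1) *
        ∏ k : Fin n, (s' k - (if hk : (k:ℕ) = 0 then y else s' ⟨(k:ℕ)-1, Nat.lt_of_le_of_lt (Nat.sub_le _ _) k.isLt⟩)) ^ (e k.succ - 1) := by
  rw [Fin.prod_univ_succ]
  congr 1
  refine Finset.prod_congr rfl fun k _ => ?_
  congr 2
  rw [dif_neg (show ((k.succ : Fin (n+1)) : ℕ) ≠ 0 by simp)]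
  have hidx : (⟨((k.succ : Fin (n+1)) : ℕ) - 1, by omega⟩ : Fin (n+1)) = k.castSucc := by ext; simp
  rw [hidx]
  by_cases hk : (k:ℕ) = 0
  · rw [dif_pos hk]
    have h0 : k.castSucc = 0 := by ext; simpa using hk
    rw [h0, Fin.cons_zero]
  · rw [dif_neg hk]
    have hs : k.castSucc = Fin.succ (⟨(k:ℕ)-1, by omega⟩ : Fin n) := by
      ext; simp; omega
    rw [hs, Fin.cons_succ]

lemma gap_measurable (n : ℕ) (t : ℝ) (e : Fin n → ℝ) :
    Measurable (fun s : Fin n → ℝ =>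
      ENNReal.ofReal (∏ j : Fin n, (s j - (if hj : (j:ℕ) = 0 then t else s ⟨(j:ℕ)-1, Nat.lt_of_le_of_lt (Nat.sub_le _ _) j.isLt⟩)) ^ (e j - 1))) := by
  refine ENNReal.measurable_ofReal.comp ?_
  refine Finset.measurable_prod _ fun j _ => ?_
  have h1 : Measurable fun s : Fin n → ℝ => s j - (if hj : (j:ℕ) = 0 then t else s ⟨(j:ℕ)-1, Nat.lt_of_le_of_lt (Nat.sub_le _ _) j.isLt⟩) := by
    by_cases hj : (j:ℕ) = 0
    · simp only [dif_pos hj]; fun_prop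
    · simp only [dif_neg hj]; fun_prop
  fun_prop

lemma simplex_lintegral (n : ℕ) : ∀ (t x : ℝ), t < x → ∀ e : Fin n → ℝ, (∀ j, 0 < e j) →
    ∫⁻ s in {s : Fin n → ℝ | StrictMono s ∧ ∀ j, s j ∈ Set.Ioo t x},
      ENNReal.ofReal (∏ j : Fin n, (s j - (if hj : (j:ℕ) = 0 then t else s ⟨(j:ℕ)-1, Nat.lt_of_le_of_lt (Nat.sub_le _ _) j.isLt⟩)) ^ (e j - 1))
    = ENNReal.ofReal ((∏ j, Real.Gamma (e j)) / Real.Gamma ((∑ j, e j) + 1) * (x - t) ^ (∑ j, e j)) := by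
  induction n with
  | zero =>
    intro t x htx e he
    have hset : {s : Fin 0 → ℝ | StrictMono s ∧ ∀ j, s j ∈ Set.Ioo t x} = Set.univ := by
      ext s
      refine ⟨fun _ => trivial, fun _ => ⟨fun i => i.elim0, fun j => j.elim0⟩⟩
    rw [hset, Measure.restrict_univ]
    have : (fun s : Fin 0 → ℝ => ENNReal.ofReal
        (∏ j : Fin 0, (s j - (if hj : (j:ℕ) = 0 then t else s ⟨(j:ℕ)-1, Nat.lt_of_le_of_lt (Nat.sub_le _ _) j.isLt⟩)) ^ (e j - 1)))
        = fun _ => 1 := by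
      funext s; simp
    rw [this, lintegral_one]
    have hvol : (volume : Measure (Fin 0 → ℝ)) Set.univ = 1 := by
      rw [MeasureTheory.volume_pi, Measure.pi_univ]
      simp
    rw [hvol]
    simp [Real.Gamma_one]
  | succ n ih =>
    intro t x htx e he
    set E := MeasurableEquiv.piFinSuccAbove (fun _ : Fin (n+1) => ℝ) 0 with hE
    set S := {s : Fin (n+1) → ℝ | StrictMono s ∧ ∀ j, s j ∈ Set.Ioo t x} with hS
    set f := fun s : Fin (n+1) → ℝ => ENNReal.ofReal
      (∏ j : Fin (n+1), (s j - (if hj : (j:ℕ) = 0 then t else s ⟨(j:ℕ)-1, Nat.lt_of_le_of_lt (Nat.sub_le _ _) j.isLt⟩)) ^ (e j - 1)) with hfdef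
    have hfm : Measurable f := gap_measurable (n+1) t e
    have hSm : MeasurableSet S := measurableSet_simplex (n+1) t x
    have hgm : Measurable (S.indicator f) := hfm.indicator hSm
    set Esum := ∑ k : Fin n, e k.succ with hEs
    set K' := (∏ k : Fin n, Real.Gamma (e k.succ)) / Real.Gamma (Esum + 1) with hK
    have hEsnn : 0 ≤ Esum := Finset.sum_nonneg fun k _ => (he k.succ).le
    have hK'nn : 0 ≤ K' := by
      have h1 : 0 ≤ ∏ k : Fin n, Real.Gamma (e k.succ) :=
        Finset.prod_nonneg fun k _ => (Real.Gamma_pos_of_pos (he k.succ)).le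
      have h2 : 0 < Real.Gamma (Esum + 1) := Real.Gamma_pos_of_pos (by linarith)
      positivity
    have consEq : ∀ (y : ℝ) (s' : Fin n → ℝ), E.symm (y, s') = Fin.cons y s' := by
      intro y s'
      simp [hE, MeasurableEquiv.piFinSuccAbove, Fin.insertNthEquiv, Fin.insertNth_zero]
    have step1 : ∫⁻ s in S, f s = ∫⁻ s, S.indicator f s := (lintegral_indicator hSm f).symm
    have mp := (MeasureTheory.volume_preserving_piFinSuccAbove (fun _ : Fin (n+1) => ℝ) 0).symm
    have step2 : ∫⁻ s, S.indicator f s = ∫⁻ p : ℝ × (Fin n → ℝ), S.indicator f (E.symm p) :=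
      (mp.lintegral_comp hgm).symm
    have inner : ∀ y : ℝ, (∫⁻ s' : Fin n → ℝ, S.indicator f (Fin.cons y s'))
        = (Set.Ioo t x).indicator
            (fun y => ENNReal.ofReal ((y - t) ^ (e 0 - 1)) * ENNReal.ofReal (K' * (x - y) ^ Esum)) y := by
      intro y
      by_cases hy : y ∈ Set.Ioo t x
      · rw [Set.indicator_of_mem hy]
        have hiff : ∀ s' : Fin n → ℝ, (Fin.cons y s' ∈ S) ↔
            s' ∈ {s' : Fin n → ℝ | StrictMono s' ∧ ∀ j, s' j ∈ Set.Ioo y x} := by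
          intro s'
          exact ⟨fun h => (cons_mem_simplex.1 h).2, fun h => cons_mem_simplex.2 ⟨hy, h⟩⟩
        have hrw : (fun s' : Fin n → ℝ => S.indicator f (Fin.cons y s'))
            = ({s' : Fin n → ℝ | StrictMono s' ∧ ∀ j, s' j ∈ Set.Ioo y x}).indicator
                (fun s' => f (Fin.cons y s')) := by
          funext s'
          by_cases h : s' ∈ {s' : Fin n → ℝ | StrictMono s' ∧ ∀ j, s' j ∈ Set.Ioo y x}
          · rw [Set.indicator_of_mem h, Set.indicator_of_mem ((hiff s').2 h)]
          · rw [Set.indicator_of_notMem h,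
              Set.indicator_of_notMem (fun hc => h ((hiff s').1 hc))]
        rw [hrw, lintegral_indicator (measurableSet_simplex n y x)]
        have hfc : ∀ s' : Fin n → ℝ, f (Fin.cons y s') = ENNReal.ofReal ((y - t) ^ (e 0 - 1)) *
            ENNReal.ofReal (∏ k : Fin n,
              (s' k - (if hk : (k:ℕ) = 0 then y else s' ⟨(k:ℕ)-1, Nat.lt_of_le_of_lt (Nat.sub_le _ _) k.isLt⟩)) ^ (e k.succ - 1)) := by
          intro s'
          rw [hfdef]
          simp only
          rw [gap_prod_cons t y s' e,
            ENNReal.ofReal_mul (Real.rpow_nonneg (by linarith [hy.1]) _)]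
        simp_rw [hfc]
        rw [lintegral_const_mul _ (gap_measurable n y (fun k => e k.succ)),
          ih y x hy.2 (fun k => e k.succ) (fun k => he k.succ)]
      · rw [Set.indicator_of_notMem hy]
        have hzero : ∀ s' : Fin n → ℝ, S.indicator f (Fin.cons y s') = 0 := fun s' =>
          Set.indicator_of_notMem
            (show Fin.cons y s' ∉ S from fun hc => hy (cons_mem_simplex.1 hc).1) f
        simp_rw [hzero]
        exact lintegral_zero
    rw [step1, step2, Measure.volume_eq_prod,
      lintegral_prod (fun p => S.indicator f (E.symm p))
        ((hgm.comp E.symm.measurable).aemeasurable)]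
    simp_rw [consEq, inner]
    rw [lintegral_indicator measurableSet_Ioo]
    have congr3 : ∫⁻ y in Set.Ioo t x,
        ENNReal.ofReal ((y - t) ^ (e 0 - 1)) * ENNReal.ofReal (K' * (x - y) ^ Esum)
        = ∫⁻ y in Set.Ioo t x,
          ENNReal.ofReal K' * ENNReal.ofReal ((y - t) ^ (e 0 - 1) * (x - y) ^ ((Esum + 1) - 1)) := by
      refine setLIntegral_congr_fun measurableSet_Ioo (fun y hy => ?_)
      rw [ENNReal.ofReal_mul hK'nn,
        ENNReal.ofReal_mul (Real.rpow_nonneg (by linarith [hy.1]) _),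
        show (Esum + 1) - 1 = Esum from by ring]
      ring
    rw [congr3, lintegral_const_mul _ (by fun_prop),
      betaIoo (he 0) (by linarith : (0:ℝ) < Esum + 1) htx,
      ← ENNReal.ofReal_mul hK'nn]
    congr 1
    have hG1 : Real.Gamma (Esum + 1) ≠ 0 := (Real.Gamma_pos_of_pos (by linarith)).ne'
    have hsum : ∑ j : Fin (n+1), e j = e 0 + Esum := by rw [Fin.sum_univ_succ]
    have hprod : ∏ j : Fin (n+1), Real.Gamma (e j)
        = Real.Gamma (e 0) * ∏ k : Fin n, Real.Gamma (e k.succ) := by rw [Fin.prod_univ_succ]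
    have hG2 : Real.Gamma ((∑ j : Fin (n+1), e j) + 1) ≠ 0 := by
      refine (Real.Gamma_pos_of_pos ?_).ne'
      have : 0 < e 0 := he 0
      rw [hsum]; linarith
    rw [hsum, hprod,
      show e 0 + (Esum + 1) - 1 = e 0 + Esum from by ring,
      show e 0 + (Esum + 1) = (e 0 + Esum) + 1 from by ring]
    rw [hsum] at hG2
    have key : ∀ (A B X G1 G2 : ℝ), G1 ≠ 0 → G2 ≠ 0 →
        A / G1 * (B * G1 / G2 * X) = B * A / G2 * X := by
      intros A B X G1 G2 h1 h2
      field_simp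
    exact key _ _ _ _ _ hG1 hG2

/-- With `s₀ := t`, for `a, b ≥ 0`, `b < 1`, `a + b < 1` and
`C := max {1, Γ(1-b), Γ(1-a-b)}`, one has
`∑ᵢ ∫_{t<s₁<⋯<sₙ<t+h} (sᵢ-sᵢ₋₁)^(-a) ∏ⱼ (sⱼ-sⱼ₋₁)^(-b) ds
  ≤ n · Cⁿ · h^(n-nb-a) / Γ(n-nb-a+1)`. -/
theorem simplex_integral_sum_bound (n : ℕ) (hn : 1 ≤ n) (t h : ℝ) (hh : 0 < h)
    (a b : ℝ) (ha : 0 ≤ a) (hb : 0 ≤ b) (hb1 : b < 1) (hab : a + b < 1) :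
    ∑ i : Fin n,
        (∫ s in {s : Fin n → ℝ | StrictMono s ∧ ∀ j, s j ∈ Set.Ioo t (t + h)},
          (s i - (if hi : (i : ℕ) = 0 then t else s ⟨(i : ℕ) - 1, by omega⟩)) ^ (-a) *
            ∏ j : Fin n,
              (s j - (if hj : (j : ℕ) = 0 then t else s ⟨(j : ℕ) - 1, by omega⟩)) ^ (-b))
      ≤ (n : ℝ) * (max (max 1 (Real.Gamma (1 - b))) (Real.Gamma (1 - a - b))) ^ n *
          h ^ ((n : ℝ) - n * b - a) / Real.Gamma ((n : ℝ) - n * b - a + 1) := by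
  set C := max (max 1 (Real.Gamma (1 - b))) (Real.Gamma (1 - a - b)) with hC
  set S := {s : Fin n → ℝ | StrictMono s ∧ ∀ j, s j ∈ Set.Ioo t (t + h)} with hSdef
  have hSm : MeasurableSet S := measurableSet_simplex n t (t+h)
  have hn1 : (1:ℝ) ≤ (n:ℝ) := by exact_mod_cast hn
  have hEpos : 0 < (n : ℝ) - n * b - a := by nlinarith
  have hGE : 0 < Real.Gamma ((n : ℝ) - n * b - a + 1) := Real.Gamma_pos_of_pos (by linarith)
  have hC1 : (1:ℝ) ≤ C := le_trans (le_max_left 1 _) (le_max_left _ _)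
  have hgap : ∀ s ∈ S, ∀ j : Fin n,
      0 < s j - (if hj : (j:ℕ) = 0 then t else s ⟨(j:ℕ)-1, by omega⟩) := by
    intro s hs j
    by_cases hj : (j:ℕ) = 0
    · rw [dif_pos hj]
      have := (hs.2 j).1
      linarith
    · rw [dif_neg hj]
      have hlt : (⟨(j:ℕ)-1, by omega⟩ : Fin n) < j := by
        rw [Fin.lt_def]
        simp
        omega
      have := hs.1 hlt
      linarith
  have key : ∀ i : Fin n,
      (∫ s in S,
          (s i - (if hi : (i : ℕ) = 0 then t else s ⟨(i : ℕ) - 1, by omega⟩)) ^ (-a) *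
            ∏ j : Fin n,
              (s j - (if hj : (j : ℕ) = 0 then t else s ⟨(j : ℕ) - 1, by omega⟩)) ^ (-b))
      ≤ C ^ n * h ^ ((n : ℝ) - n * b - a) / Real.Gamma ((n : ℝ) - n * b - a + 1) := by
    intro i
    set ee : Fin n → ℝ := fun j => if j = i then 1 - a - b else 1 - b with hee
    have heepos : ∀ j, 0 < ee j := by
      intro j
      by_cases hj : j = i <;> simp only [hee, hj, if_pos, if_neg, if_true] <;> simp [hj] <;> linarith
    have hsum_ee : ∑ j, ee j = (n : ℝ) - n * b - a := by
      have h1 : ∀ j : Fin n, ee j = (1 - b) + (if j = i then -a else 0) := by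
        intro j
        by_cases hj : j = i <;> simp [hee, hj] <;> ring
      rw [Finset.sum_congr rfl (fun j _ => h1 j), Finset.sum_add_distrib, Finset.sum_const,
        Finset.sum_ite_eq' Finset.univ i (fun _ => -a)]
      simp [Finset.card_univ]
      ring
    have hprod_le : ∏ j, Real.Gamma (ee j) ≤ C ^ n := by
      calc ∏ j, Real.Gamma (ee j) ≤ ∏ _j : Fin n, C := by
            refine Finset.prod_le_prod (fun j _ => (Real.Gamma_pos_of_pos (heepos j)).le)
              (fun j _ => ?_)
            by_cases hj : j = i
            · simp only [hee, hj, if_pos rfl]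
              exact le_max_right _ _
            · simp only [hee, if_neg hj]
              exact le_trans (le_max_right 1 _) (le_max_left _ _)
        _ = C ^ n := by
            rw [Finset.prod_const, Finset.card_univ, Fintype.card_fin]
    have hprod_nn : 0 ≤ ∏ j, Real.Gamma (ee j) :=
      Finset.prod_nonneg fun j _ => (Real.Gamma_pos_of_pos (heepos j)).le
    set fI := fun s : Fin n → ℝ =>
      (s i - (if hi : (i : ℕ) = 0 then t else s ⟨(i : ℕ) - 1, by omega⟩)) ^ (-a) *
        ∏ j : Fin n,
          (s j - (if hj : (j : ℕ) = 0 then t else s ⟨(j : ℕ) - 1, by omega⟩)) ^ (-b) with hfI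
    have hgapm : ∀ j : Fin n, Measurable (fun s : Fin n → ℝ =>
        s j - (if hj : (j:ℕ) = 0 then t else s ⟨(j:ℕ)-1, by omega⟩)) := by
      intro j
      by_cases hj : (j:ℕ) = 0
      · simp only [dif_pos hj]; fun_prop
      · simp only [dif_neg hj]; fun_prop
    have hfIm : Measurable fI := by
      refine Measurable.mul ?_ (Finset.measurable_prod _ fun j _ => ?_)
      · have := hgapm i; fun_prop
      · have := hgapm j; fun_prop
    have hnn : 0 ≤ᵐ[volume.restrict S] fI := by
      refine (ae_restrict_iff' hSm).2 (ae_of_all _ fun s hs => ?_)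
      have h1 := (hgap s hs i).le
      have h2 : 0 ≤ ∏ j : Fin n,
          (s j - (if hj : (j : ℕ) = 0 then t else s ⟨(j : ℕ) - 1, by omega⟩)) ^ (-b) :=
        Finset.prod_nonneg fun j _ => Real.rpow_nonneg (hgap s hs j).le _
      exact mul_nonneg (Real.rpow_nonneg h1 _) h2
    have hfIeq : ∀ s ∈ S, fI s = ∏ j : Fin n,
        (s j - (if hj : (j : ℕ) = 0 then t else s ⟨(j : ℕ) - 1, by omega⟩)) ^ (ee j - 1) := by
      intro s hs
      have h1 : ∀ j : Fin n,
          (s j - (if hj : (j : ℕ) = 0 then t else s ⟨(j : ℕ) - 1, by omega⟩)) ^ (ee j - 1)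
          = (s j - (if hj : (j : ℕ) = 0 then t else s ⟨(j : ℕ) - 1, by omega⟩)) ^ (-b) *
            (if j = i then
              (s j - (if hj : (j : ℕ) = 0 then t else s ⟨(j : ℕ) - 1, by omega⟩)) ^ (-a)
             else 1) := by
        intro j
        by_cases hj : j = i
        · simp only [hee, hj, if_pos rfl, if_true]
          rw [show (1 - a - b) - 1 = -b + -a from by ring, Real.rpow_add (hgap s hs i)]
        · simp only [hee, if_neg hj, mul_one]
          rw [show (1 - b) - 1 = -b from by ring]
      rw [Finset.prod_congr rfl (fun j _ => h1 j), Finset.prod_mul_distrib,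
        Finset.prod_ite_eq' Finset.univ i]
      simp only [Finset.mem_univ, if_pos]
      rw [hfI]
      ring
    rw [MeasureTheory.integral_eq_lintegral_of_nonneg_ae hnn hfIm.aestronglyMeasurable]
    have hcong : ∫⁻ s in S, ENNReal.ofReal (fI s)
        = ∫⁻ s in S, ENNReal.ofReal (∏ j : Fin n,
            (s j - (if hj : (j : ℕ) = 0 then t else s ⟨(j : ℕ) - 1, by omega⟩)) ^ (ee j - 1)) :=
      setLIntegral_congr_fun hSm (fun s hs => by rw [hfIeq s hs])
    rw [hcong, hSdef, simplex_lintegral n t (t+h) (by linarith) ee heepos, hsum_ee,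
      show t + h - t = h from by ring, ENNReal.toReal_ofReal (by positivity)]
    rw [div_mul_eq_mul_div, div_le_div_iff₀ hGE hGE]
    have hh' : (0:ℝ) < h ^ ((n : ℝ) - n * b - a) := Real.rpow_pos_of_pos hh _
    nlinarith [mul_le_mul_of_nonneg_right hprod_le hh'.le]
  calc ∑ i : Fin n, (∫ s in S,
          (s i - (if hi : (i : ℕ) = 0 then t else s ⟨(i : ℕ) - 1, by omega⟩)) ^ (-a) *
            ∏ j : Fin n,
              (s j - (if hj : (j : ℕ) = 0 then t else s ⟨(j : ℕ) - 1, by omega⟩)) ^ (-b))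
      ≤ ∑ _i : Fin n, C ^ n * h ^ ((n : ℝ) - n * b - a) / Real.Gamma ((n : ℝ) - n * b - a + 1) :=
        Finset.sum_le_sum fun i _ => key i
    _ = (n : ℝ) * C ^ n * h ^ ((n : ℝ) - n * b - a) / Real.Gamma ((n : ℝ) - n * b - a + 1) := by
        rw [Finset.sum_const, Finset.card_univ, Fintype.card_fin, nsmul_eq_mul]
        ring
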